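/- arXiv:2311.03109 — 3 statements merged into one kernel-verified Lean document; each statement's English description precedes it below -/
import Mathlib

section
/- Every tensor A ∈ ℝ^{I_1×…×I_N×J_1×…×J_M} (with M ≤ N) admits an Einstein-product singular value decomposition A = U *_N S *_M V^T, where U ∈ ℝ^{I_1×…×I_N×I_1×…×I_N} and V ∈ ℝ^{J_1×…×J_M×J_1×…×J_M} are orthogonal with respect to the Einstein product (U^T *_N U = I_N, V^T *_M V = I_M) and S ∈ ℝ^{I_1×…×I_N×J_1×…×J_M} is a diagonal tensor with nonnegative diagonal entries. -/
/-- The Einstein product. -/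
def eprod {ι κ μ : Type*} [Fintype κ] (A : ι → κ → ℝ) (B : κ → μ → ℝ) : ι → μ → ℝ :=
  fun i m => ∑ k, A i k * B k m

/-- The transpose of a tensor. -/
def ttrans {ι κ : Type*} (A : ι → κ → ℝ) : κ → ι → ℝ := fun k i => A i k

/-- The identity tensor. -/
def eid {ι : Type*} [DecidableEq ι] : ι → ι → ℝ := fun i j => if i = j then 1 else 0

open Matrix

lemma eprod_eq {ι κ μ : Type*} [Fintype κ] (A : Matrix ι κ ℝ) (B : Matrix κ μ ℝ) :
    eprod A B = (A * B : Matrix ι μ ℝ) := by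
  funext i m; rw [Matrix.mul_apply]; rfl

lemma ttrans_eq {ι κ : Type*} (A : Matrix ι κ ℝ) : ttrans A = (Aᵀ : Matrix κ ι ℝ) := rfl

lemma eid_eq {ι : Type*} [Fintype ι] [DecidableEq ι] : (eid : ι → ι → ℝ) = (1 : Matrix ι ι ℝ) := by
  funext i j; rw [Matrix.one_apply]; rfl

/-- Every tensor `A ∈ ℝ^{I₁×…×I_N×J₁×…×J_M}` (with `M ≤ N`, encoded by the injective
padding map `pad : κ → ι` sending a `J`-multi-index `(j₁,…,j_M)` to `(j₁,…,j_M,1,…,1)`)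
admits an Einstein-product SVD `A = U *_N S *_M V^T` with `U, V` Einstein-orthogonal
(`U^T *_N U = I_N`, `V^T *_M V = I_M`) and `S` diagonal with nonnegative diagonal
entries (supported on the padded diagonal). -/
theorem einstein_svd_exists {ι κ : Type*} [Fintype ι] [Fintype κ]
    [DecidableEq ι] [DecidableEq κ]
    (pad : κ → ι) (hpad : Function.Injective pad) (A : ι → κ → ℝ) :
    ∃ (U : ι → ι → ℝ) (S : ι → κ → ℝ) (V : κ → κ → ℝ),
      eprod (ttrans U) U = eid ∧
      eprod (ttrans V) V = eid ∧
      (∀ i j, i ≠ pad j → S i j = 0) ∧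
      (∀ j, 0 ≤ S (pad j) j) ∧
      A = eprod (eprod U S) (ttrans V) := by
  classical
  set M : Matrix ι κ ℝ := Matrix.of A with hM
  have hPSD := Matrix.posSemidef_conjTranspose_mul_self M
  have hH : (Mᴴ * M).IsHermitian := hPSD.isHermitian
  set V : Matrix κ κ ℝ := (hH.eigenvectorUnitary : Matrix κ κ ℝ) with hV
  set lam : κ → ℝ := hH.eigenvalues with hlamdef
  have hlam : ∀ j, 0 ≤ lam j := hPSD.eigenvalues_nonneg
  set σ : κ → ℝ := fun j => Real.sqrt (lam j) with hσ
  have hσnn : ∀ j, 0 ≤ σ j := fun j => Real.sqrt_nonneg _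
  have hσsq : ∀ j, σ j * σ j = lam j := fun j => Real.mul_self_sqrt (hlam j)
  set W : Matrix ι κ ℝ := M * V with hW
  -- star V * V = 1 and V * star V = 1
  have hVmem := hH.eigenvectorUnitary.2
  have hV1 : Vᵀ * V = 1 := by
    have := (Unitary.mem_iff.mp hVmem).1
    rw [hV]; simpa [Matrix.star_eq_conjTranspose, Matrix.conjTranspose_eq_transpose_of_trivial] using this
  have hV2 : V * Vᵀ = 1 := by
    have := (Unitary.mem_iff.mp hVmem).2
    rw [hV]; simpa [Matrix.star_eq_conjTranspose, Matrix.conjTranspose_eq_transpose_of_trivial] using this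
  have hWtW : Wᵀ * W = Matrix.diagonal lam := by
    have h := hH.conjStarAlgAut_star_eigenvectorUnitary
    simp only [Unitary.conjStarAlgAut_apply, Unitary.coe_star, star_star] at h
    have h2 : Vᵀ * (Mᴴ * M) * V = Matrix.diagonal lam := by
      have : (RCLike.ofReal ∘ hH.eigenvalues : κ → ℝ) = lam := by
        funext j; simp [hlamdef]
      rw [← this, ← h]
      simp [Matrix.star_eq_conjTranspose, Matrix.conjTranspose_eq_transpose_of_trivial, hV]
    calc Wᵀ * W = Vᵀ * (Mᴴ * M) * V := by
          rw [hW, Matrix.transpose_mul, Matrix.conjTranspose_eq_transpose_of_trivial]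
          simp only [Matrix.mul_assoc]
      _ = Matrix.diagonal lam := h2
  have hWentry : ∀ j j', ∑ x, W x j * W x j' = Matrix.diagonal lam j j' := by
    intro j j'
    have := congrFun (congrFun hWtW j) j'
    rw [Matrix.mul_apply] at this
    simpa [Matrix.transpose_apply, mul_comm] using this
  have hW0 : ∀ j, σ j = 0 → ∀ x, W x j = 0 := by
    intro j hj x
    have hl : lam j = 0 := by
      have := hσsq j; rw [hj] at this; linarith
    have hsum : ∑ x, W x j * W x j = 0 := by
      simpa [hl] using hWentry j j
    have := (Finset.sum_eq_zero_iff_of_nonneg (fun x _ => mul_self_nonneg (W x j))).mp hsum x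
      (Finset.mem_univ x)
    exact mul_self_eq_zero.mp this
  clear_value M V lam σ W
  -- orthonormal family
  set u : κ → EuclideanSpace ℝ ι := fun j => WithLp.toLp 2 ((σ j)⁻¹ • (fun x => W x j)) with hu
  set s : Set ι := pad '' {j | σ j ≠ 0} with hs
  set v : ι → EuclideanSpace ℝ ι :=
    fun i => if h : ∃ j, σ j ≠ 0 ∧ pad j = i then u h.choose else 0 with hvdef
  have huinner : ∀ j j', σ j ≠ 0 → σ j' ≠ 0 →
      inner ℝ (u j) (u j') = (if j = j' then (1:ℝ) else 0) := by
    intro j j' hj hj'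
    have : (inner ℝ (u j) (u j') : ℝ) = (σ j)⁻¹ * (σ j')⁻¹ * ∑ x, W x j * W x j' := by
      rw [hu]
      simp only [PiLp.inner_apply, PiLp.toLp_apply, Pi.smul_apply, smul_eq_mul, RCLike.inner_apply,
        starRingEnd_apply, star_trivial]
      rw [Finset.mul_sum]
      refine Finset.sum_congr rfl fun x _ => ?_
      ring
    rw [this, hWentry j j']
    by_cases h : j = j'
    · subst h
      rw [if_pos rfl, Matrix.diagonal_apply_eq, ← hσsq j]
      field_simp
    · simp [Matrix.diagonal_apply_ne _ h, h]
  have hvon : Orthonormal ℝ (s.restrict v) := by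
    rw [orthonormal_iff_ite]
    rintro ⟨i, hi⟩ ⟨i', hi'⟩
    have hex : ∃ j, σ j ≠ 0 ∧ pad j = i := by
      obtain ⟨j, hj1, hj2⟩ := hi; exact ⟨j, hj1, hj2⟩
    have hex' : ∃ j, σ j ≠ 0 ∧ pad j = i' := by
      obtain ⟨j, hj1, hj2⟩ := hi'; exact ⟨j, hj1, hj2⟩
    simp only [Set.restrict_apply, Set.restrict, hvdef, dif_pos hex, dif_pos hex']
    rw [huinner _ _ hex.choose_spec.1 hex'.choose_spec.1]
    have hiff : hex.choose = hex'.choose ↔ i = i' := by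
      constructor
      · intro h; rw [← hex.choose_spec.2, ← hex'.choose_spec.2, h]
      · intro h; exact hpad (by rw [hex.choose_spec.2, hex'.choose_spec.2, h])
    simp only [Subtype.mk.injEq]
    by_cases h : i = i' <;> simp [h, hiff]
  obtain ⟨b, hb⟩ := hvon.exists_orthonormalBasis_extension_of_card_eq
    (finrank_euclideanSpace (𝕜 := ℝ) (ι := ι))
  set U : Matrix ι ι ℝ := Matrix.of fun x i => b i x with hU
  set S : Matrix ι κ ℝ := Matrix.of fun i j => if i = pad j then σ j else 0 with hSdef
  have hU1 : Uᵀ * U = 1 := by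
    funext i i'
    rw [Matrix.mul_apply, Matrix.one_apply]
    have := orthonormal_iff_ite.mp b.orthonormal i i'
    rw [PiLp.inner_apply] at this
    simpa [hU, RCLike.inner_apply, starRingEnd_apply, mul_comm] using this
  have hUS : U * S = W := by
    funext x j
    rw [Matrix.mul_apply]
    have hcollapse : ∑ i, U x i * S i j = U x (pad j) * σ j := by
      rw [hSdef]
      simp only [Matrix.of_apply, mul_ite, mul_zero]
      rw [Finset.sum_ite_eq' Finset.univ (pad j) (fun i => U x i * σ j)]
      simp
    rw [hcollapse]
    by_cases hj : σ j = 0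
    · rw [hj, mul_zero, hW0 j hj x]
    · have hmem : pad j ∈ s := ⟨j, hj, rfl⟩
      have hex : ∃ j', σ j' ≠ 0 ∧ pad j' = pad j := ⟨j, hj, rfl⟩
      have hbv : b (pad j) = u hex.choose := by
        rw [hb (pad j) hmem, hvdef]; exact dif_pos hex
      have hje : hex.choose = j := hpad hex.choose_spec.2
      rw [hU]
      show b (pad j) x * σ j = W x j
      rw [hbv, hje, hu]
      show (σ j)⁻¹ * W x j * σ j = W x j
      field_simp
  refine ⟨U, S, V, ?_, ?_, ?_, ?_, ?_⟩
  · rw [ttrans_eq, eprod_eq, eid_eq, hU1]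
  · rw [ttrans_eq, eprod_eq, eid_eq, hV1]
  · intro i j hij
    show (if i = pad j then σ j else 0) = 0
    exact if_neg hij
  · intro j
    show (0:ℝ) ≤ if pad j = pad j then σ j else 0
    rw [if_pos rfl]; exact hσnn j
  · rw [ttrans_eq, eprod_eq, eprod_eq]
    show A = (U * S * Vᵀ : Matrix ι κ ℝ)
    rw [hUS, hW, Matrix.mul_assoc, hV2, Matrix.mul_one, hM]
    rfl
end

section
/- Let A ∈ ℝ^{I_1×…×I_N×J_1×…×J_M} with Einstein SVD A = U *_N S *_M V^T. Then A can be written as a sum of rank-one terms: A = Σ_{i_1,…,i_M} μ_{i_1…i_M} · U_{i_1…i_M} ∘ V_{i_1…i_M}, where the sum runs over i_k = 1,…,min(I_k,J_k), μ_{i_1…i_M} are the singular values, U_{i_1…i_M} ∈ ℝ^{I_1×…×I_N} and V_{i_1…i_M} ∈ ℝ^{J_1×…×J_M} are the corresponding slices of U and V, and ∘ denotes the outer product. -/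
/-- The outer product `(X ∘ Y)_{αβ} = X_α Y_β`. -/
def touter {ι κ : Type*} (X : ι → ℝ) (Y : κ → ℝ) : ι → κ → ℝ := fun i k => X i * Y k

/-- If `A = U *_N S *_M V^T` is an Einstein SVD with `S` diagonal (supported on the
padded diagonal given by the injective `pad : κ → ι`, with singular values
`μ_{i₁…i_M} = S (pad j) j`), then `A` is the sum of the rank-one terms
`μ_{i₁…i_M} · U_{i₁…i_M} ∘ V_{i₁…i_M}`, where `U_{i₁…i_M}` and `V_{i₁…i_M}` are the
corresponding slices of `U` and `V`. -/
theorem einstein_svd_rank_one_sum {ι κ : Type*} [Fintype ι] [Fintype κ]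
    (pad : κ → ι) (hpad : Function.Injective pad)
    (A : ι → κ → ℝ) (U : ι → ι → ℝ) (S : ι → κ → ℝ) (V : κ → κ → ℝ)
    (hS : ∀ i j, i ≠ pad j → S i j = 0)
    (hA : A = eprod (eprod U S) (ttrans V)) :
    A = ∑ j : κ, S (pad j) j • touter (fun i => U i (pad j)) (fun k => V k j) := by
  subst hA
  funext i m
  simp only [eprod, ttrans, Finset.sum_apply, Pi.smul_apply, touter, smul_eq_mul]
  refine Finset.sum_congr rfl fun j _ => ?_
  rw [Finset.sum_eq_single (pad j)]
  · ring
  · intro k _ hk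
    rw [hS k j hk, mul_zero]
  · intro h; exact absurd (Finset.mem_univ _) h
end

section
/- Suppose the Einstein tensor Lanczos bidiagonalization relations hold after m steps: A *_M ℙ_m = ℚ_m ×_{N+1} B_m^T and A^T *_N ℚ_m = ℙ_m ×_{M+1} B_m + R_m ∘ e_m, where ℙ_m has orthonormal slices P_1,…,P_m, ℚ_m has orthonormal slices Q_1,…,Q_m, B_m is the m×m upper bidiagonal matrix with diagonal α_1,…,α_m and superdiagonal β_1,…,β_{m-1}. If (s, u, v) is a singular triplet of B_m (B_m v = s u, B_m^T u = s v), then the tensors Ṽ = ℙ_m ×_{M+1} v^T and Ũ = ℚ_m ×_{N+1} u^T satisfy A *_M Ṽ = s Ũ and A^T *_N Ũ = s Ṽ + (R_m ∘ e_m) ×_{M+1} u^T. -/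
/-- Slice-wise application of `A` to a tensor with an extra last mode (`A *_M ℙ_m`). -/
def eprodSlices {ι κ : Type*} {m : ℕ} [Fintype κ] (A : ι → κ → ℝ) (P : κ → Fin m → ℝ) :
    ι → Fin m → ℝ := fun i j => ∑ k, A i k * P k j

/-- The `(M+1)`-mode product of `ℙ` with a matrix `B`. -/
def modeLast {κ : Type*} {m : ℕ} (P : κ → Fin m → ℝ) (B : Matrix (Fin m) (Fin m) ℝ) :
    κ → Fin m → ℝ := fun x i => ∑ k, P x k * B i k

/-- Contraction of the last mode of `ℙ` against a vector `u` (i.e. `ℙ ×_{M+1} u^T`). -/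
def modeVec {κ : Type*} {m : ℕ} (P : κ → Fin m → ℝ) (u : Fin m → ℝ) : κ → ℝ :=
  fun x => ∑ k, u k * P x k

/-- Application of `A ∈ ℝ^{I×J}` to `V ∈ ℝ^{J}` (`A *_M V`). -/
def applyT {ι κ : Type*} [Fintype κ] (A : ι → κ → ℝ) (V : κ → ℝ) : ι → ℝ :=
  fun i => ∑ k, A i k * V k

/-- The outer product `R ∘ e` of `R ∈ ℝ^{J₁×…×J_M}` with a vector `e ∈ ℝ^m`. -/
def outerLast {κ : Type*} {m : ℕ} (R : κ → ℝ) (e : Fin m → ℝ) : κ → Fin m → ℝ :=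
  fun x j => R x * e j

/-- The Frobenius inner product of same-size tensors. -/
def tinner {κ : Type*} [Fintype κ] (X Y : κ → ℝ) : ℝ := ∑ x, X x * Y x


lemma applyT_modeVec {ι' κ' : Type*} [Fintype κ'] {m : ℕ} (C : ι' → κ' → ℝ)
    (T : κ' → Fin (m+1) → ℝ) (w : Fin (m+1) → ℝ) :
    applyT C (modeVec T w) = fun i => ∑ j, w j * (eprodSlices C T) i j := by
  funext i
  simp only [applyT, modeVec, eprodSlices, Finset.mul_sum, Finset.sum_mul]
  rw [Finset.sum_comm]
  congr 1; ext j; congr 1; ext k; ring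

/-- If, after `m` steps, the Einstein tensor Lanczos bidiagonalization relations
`A *_M ℙ_m = ℚ_m ×_{N+1} B_m^T` and `A^T *_N ℚ_m = ℙ_m ×_{M+1} B_m + R_m ∘ e_m` hold,
with `ℙ_m, ℚ_m` having orthonormal slices and `B_m` upper bidiagonal, and `(s, u, v)`
is a singular triplet of `B_m`, then `Ṽ = ℙ_m ×_{M+1} v^T` and `Ũ = ℚ_m ×_{N+1} u^T`
satisfy `A *_M Ṽ = s Ũ` and `A^T *_N Ũ = s Ṽ + (R_m ∘ e_m) ×_{M+1} u^T`. -/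
theorem lanczos_singular_triplet {ι κ : Type*} [Fintype ι] [Fintype κ] {m : ℕ}
    (A : ι → κ → ℝ) (P : κ → Fin (m + 1) → ℝ) (Q : ι → Fin (m + 1) → ℝ)
    (B : Matrix (Fin (m + 1)) (Fin (m + 1)) ℝ) (R : κ → ℝ)
    (hP : ∀ i j, tinner (fun x => P x i) (fun x => P x j) = if i = j then 1 else 0)
    (hQ : ∀ i j, tinner (fun x => Q x i) (fun x => Q x j) = if i = j then 1 else 0)
    (hBd : ∀ i j : Fin (m + 1), (j : ℕ) ≠ (i : ℕ) → (j : ℕ) ≠ (i : ℕ) + 1 → B i j = 0)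
    (h₁ : eprodSlices A P = modeLast Q B.transpose)
    (h₂ : eprodSlices (ttrans A) Q =
      modeLast P B + outerLast R (Pi.single (Fin.last m) 1))
    (s : ℝ) (u v : Fin (m + 1) → ℝ)
    (hv : B.mulVec v = s • u) (hu : B.transpose.mulVec u = s • v) :
    applyT A (modeVec P v) = s • modeVec Q u ∧
    applyT (ttrans A) (modeVec Q u) =
      s • modeVec P v + modeVec (outerLast R (Pi.single (Fin.last m) 1)) u := by
  constructor
  · rw [applyT_modeVec A P v, h₁]
    funext i
    have hmv : ∀ k, ∑ j, B k j * v j = s * u k := fun k => by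
      simpa [Matrix.mulVec, dotProduct] using congrFun hv k
    simp only [modeLast, Matrix.transpose_apply, Pi.smul_apply, smul_eq_mul, modeVec,
      Finset.mul_sum]
    rw [Finset.sum_comm]
    refine Finset.sum_congr rfl fun k _ => ?_
    calc ∑ j, v j * (Q i k * B k j)
        = Q i k * ∑ j, B k j * v j := by
          rw [Finset.mul_sum]; exact Finset.sum_congr rfl fun j _ => by ring
      _ = s * (u k * Q i k) := by rw [hmv k]; ring
  · rw [applyT_modeVec (ttrans A) Q u, h₂]
    funext x
    have hmu : ∀ k, ∑ j, B j k * u j = s * v k := fun k => by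
      simpa [Matrix.mulVec, dotProduct, Matrix.transpose_apply] using congrFun hu k
    simp only [Pi.add_apply, modeLast, outerLast, Pi.smul_apply, smul_eq_mul, modeVec,
      Finset.mul_sum, mul_add, Finset.sum_add_distrib]
    congr 1
    · rw [Finset.sum_comm]
      refine Finset.sum_congr rfl fun k _ => ?_
      calc ∑ j, u j * (P x k * B j k)
          = P x k * ∑ j, B j k * u j := by
            rw [Finset.mul_sum]; exact Finset.sum_congr rfl fun j _ => by ring
        _ = s * (v k * P x k) := by rw [hmu k]; ring
end
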